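/- The set L of initial angles from which the rod first falls on the left is open: L := {φ ∈ (0, π) : there exists t > 0 with A φ t = π and A φ s ∈ (0, π) for all s ∈ [0, t)} is an open subset of ℝ. -/

import Mathlib

open Real Set Filter Topology


/-- `α` is a solution of the inverted-pendulum equation
`α'' t = -g * cos (α t) + u t * sin (α t)`. -/
def IsPendulumSolution (g : ℝ) (u : ℝ → ℝ) (α : ℝ → ℝ) : Prop :=
  ContDiff ℝ 2 α ∧
    ∀ t : ℝ, deriv (deriv α) t = -g * Real.cos (α t) + u t * Real.sin (α t)

lemma lipCos : LipschitzWith 1 Real.cos := by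
  apply lipschitzWith_of_nnnorm_deriv_le Real.differentiable_cos
  intro x
  rw [Real.deriv_cos]
  simp [← NNReal.coe_le_coe, Real.norm_eq_abs, abs_le]
  constructor <;> [linarith [Real.neg_one_le_sin x]; linarith [Real.sin_le_one x]]

lemma lipSin : LipschitzWith 1 Real.sin := by
  apply lipschitzWith_of_nnnorm_deriv_le Real.differentiable_sin
  intro x
  rw [Real.deriv_sin]
  simp [← NNReal.coe_le_coe, Real.norm_eq_abs, abs_le]
  constructor <;> [linarith [Real.neg_one_le_cos x]; linarith [Real.cos_le_one x]]

lemma sol_diff {g : ℝ} {u : ℝ → ℝ} {α : ℝ → ℝ} (h : IsPendulumSolution g u α) :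
    Differentiable ℝ α ∧ Differentiable ℝ (deriv α) := by
  have h2 : ContDiff ℝ ((1:ℕ) + 1) α := by exact_mod_cast h.1
  obtain ⟨hd, hc⟩ := contDiff_succ_iff_deriv.mp h2
  exact ⟨hd, hc.2.differentiable (by simp)⟩

lemma pendulum_gronwall (g : ℝ) (u : ℝ → ℝ) (hu : Continuous u) (T : ℝ) (hT : 0 ≤ T) :
    ∃ C > 0, ∀ α β : ℝ → ℝ, IsPendulumSolution g u α → IsPendulumSolution g u β →
      deriv α 0 = deriv β 0 →
      ∀ s ∈ Set.Icc (0:ℝ) T, |β s - α s| ≤ C * |β 0 - α 0| := by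
  obtain ⟨M, hM⟩ : ∃ M : ℝ, ∀ s ∈ Set.Icc (0:ℝ) T, |u s| ≤ M := by
    obtain ⟨M, hM⟩ := (isCompact_Icc (a := (0:ℝ)) (b := T)).exists_bound_of_continuousOn
      (hu.abs.continuousOn)
    exact ⟨M, fun s hs => by simpa [Real.norm_eq_abs, abs_abs] using hM s hs⟩
  have hM0 : 0 ≤ M := le_trans (abs_nonneg _) (hM 0 ⟨le_refl _, hT⟩)
  set K : ℝ := max 1 (|g| + M) with hK
  have hK1 : (1:ℝ) ≤ K := le_max_left _ _
  have hKgM : |g| + M ≤ K := le_max_right _ _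
  have hK0 : (0:ℝ) < K := lt_of_lt_of_le one_pos hK1
  refine ⟨Real.exp (K * T), Real.exp_pos _, ?_⟩
  intro α β hα hβ hder s hs
  have hαd := sol_diff hα
  have hβd := sol_diff hβ
  set f : ℝ → ℝ × ℝ := fun s => (β s - α s, deriv β s - deriv α s) with hf
  have hfd : ∀ r : ℝ, HasDerivAt f
      (deriv β r - deriv α r, deriv (deriv β) r - deriv (deriv α) r) r := by
    intro r
    exact ((hβd.1 r).hasDerivAt.sub (hαd.1 r).hasDerivAt).prodMk
      ((hβd.2 r).hasDerivAt.sub (hαd.2 r).hasDerivAt)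
  have key : ∀ r ∈ Set.Icc (0:ℝ) T, ‖f r‖ ≤ ‖f 0‖ * Real.exp (K * r) := by
    have := norm_le_gronwallBound_of_norm_deriv_right_le (E := ℝ × ℝ)
      (f := f) (f' := fun r => (deriv β r - deriv α r, deriv (deriv β) r - deriv (deriv α) r))
      (δ := ‖f 0‖) (K := K) (ε := 0) (a := 0) (b := T)
      (fun r _ => (hfd r).continuousAt.continuousWithinAt)
      (fun r _ => ((hfd r).hasDerivWithinAt)) (le_refl _) ?_
    · intro r hr
      have := this r hr
      rwa [gronwallBound_ε0, sub_zero] at this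
    · intro r hr
      have hbnd : ‖(deriv β r - deriv α r, deriv (deriv β) r - deriv (deriv α) r)‖
          = max |deriv β r - deriv α r| |deriv (deriv β) r - deriv (deriv α) r| := by
        simp [Prod.norm_def, Real.norm_eq_abs]
      rw [hbnd]
      have hfr : ‖f r‖ = max |β r - α r| |deriv β r - deriv α r| := by
        simp [hf, Prod.norm_def, Real.norm_eq_abs]
      have h1 : |deriv β r - deriv α r| ≤ K * ‖f r‖ := by
        calc |deriv β r - deriv α r| ≤ ‖f r‖ := by rw [hfr]; exact le_max_right _ _
        _ = 1 * ‖f r‖ := (one_mul _).symm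
        _ ≤ K * ‖f r‖ := mul_le_mul_of_nonneg_right hK1 (norm_nonneg _)
      have h2 : |deriv (deriv β) r - deriv (deriv α) r| ≤ K * ‖f r‖ := by
        rw [hβ.2, hα.2]
        have hcos : |Real.cos (β r) - Real.cos (α r)| ≤ |β r - α r| := by
          simpa [Real.dist_eq] using lipCos.dist_le_mul (β r) (α r)
        have hsin : |Real.sin (β r) - Real.sin (α r)| ≤ |β r - α r| := by
          simpa [Real.dist_eq] using lipSin.dist_le_mul (β r) (α r)
        have hur : |u r| ≤ M := hM r ⟨hr.1, le_of_lt (lt_of_lt_of_le hr.2 (le_refl T))⟩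
        have expand : -g * Real.cos (β r) + u r * Real.sin (β r) -
            (-g * Real.cos (α r) + u r * Real.sin (α r))
            = -g * (Real.cos (β r) - Real.cos (α r)) + u r * (Real.sin (β r) - Real.sin (α r)) := by
          ring
        rw [expand]
        calc |(-g) * (Real.cos (β r) - Real.cos (α r)) + u r * (Real.sin (β r) - Real.sin (α r))|
            ≤ |(-g) * (Real.cos (β r) - Real.cos (α r))| + |u r * (Real.sin (β r) - Real.sin (α r))| :=
              abs_add_le _ _
          _ = |g| * |Real.cos (β r) - Real.cos (α r)| + |u r| * |Real.sin (β r) - Real.sin (α r)| := by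
              rw [abs_mul, abs_mul, abs_neg]
          _ ≤ |g| * |β r - α r| + M * |β r - α r| :=
              add_le_add (mul_le_mul_of_nonneg_left hcos (abs_nonneg g))
                (mul_le_mul hur hsin (abs_nonneg _) hM0)
          _ = (|g| + M) * |β r - α r| := by ring
          _ ≤ K * ‖f r‖ := by
              apply mul_le_mul hKgM ?_ (abs_nonneg _) (le_of_lt hK0)
              rw [hfr]; exact le_max_left _ _
      rw [add_zero, max_le_iff]
      exact ⟨h1, h2⟩
  have hfs := key s hs
  have hf0 : ‖f 0‖ = |β 0 - α 0| := by
    simp [hf, hder, Prod.norm_def, Real.norm_eq_abs]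
  calc |β s - α s| ≤ ‖f s‖ := by
        simp only [hf, Prod.norm_def, Real.norm_eq_abs]; exact le_max_left _ _
    _ ≤ ‖f 0‖ * Real.exp (K * s) := hfs
    _ ≤ |β 0 - α 0| * Real.exp (K * T) := by
        rw [hf0]
        exact mul_le_mul_of_nonneg_left
          (Real.exp_le_exp.mpr (mul_le_mul_of_nonneg_left hs.2 (le_of_lt hK0))) (abs_nonneg _)
    _ = Real.exp (K * T) * |β 0 - α 0| := mul_comm _ _

lemma deriv_pos_at_hit (g : ℝ) (hg : 0 < g) (u : ℝ → ℝ) (α : ℝ → ℝ)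
    (hα : IsPendulumSolution g u α) (t : ℝ) (ht : 0 < t) (hπ : α t = Real.pi)
    (hb : ∀ s ∈ Set.Ico (0:ℝ) t, α s < Real.pi) : 0 < deriv α t := by
  have hd := sol_diff hα
  have hmono : 𝓝[<] t ≤ 𝓝[≠] t := nhdsWithin_mono _ (fun x hx => ne_of_lt hx)
  -- nonneg
  have htend : Filter.Tendsto (slope α t) (𝓝[<] t) (𝓝 (deriv α t)) :=
    ((hasDerivAt_iff_tendsto_slope).mp (hd.1 t).hasDerivAt).mono_left hmono
  have hge : 0 ≤ deriv α t := by
    refine ge_of_tendsto htend ?_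
    have h0 : ∀ᶠ s in 𝓝[<] t, (0:ℝ) < s := by
      refine eventually_nhdsWithin_of_eventually_nhds ?_
      exact eventually_gt_nhds ht
    filter_upwards [h0, self_mem_nhdsWithin] with s hs0 hst
    have hst' : s < t := hst
    have h1 : α s < Real.pi := hb s ⟨le_of_lt hs0, hst'⟩
    have : slope α t s = (α s - α t) / (s - t) := by rw [slope_def_field]
    rw [this, hπ]
    exact div_nonneg_iff.mpr (Or.inr ⟨by linarith, by linarith⟩)
  rcases lt_or_eq_of_le hge with h | h
  · exact h
  · exfalso
    -- deriv α t = 0, second derivative is g > 0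
    have hDD : HasDerivAt (deriv α) g t := by
      have := (hd.2 t).hasDerivAt
      rwa [hα.2 t, hπ, Real.cos_pi, Real.sin_pi, mul_zero, add_zero, mul_neg_one, neg_neg] at this
    have htend2 : Filter.Tendsto (slope (deriv α) t) (𝓝[<] t) (𝓝 g) :=
      ((hasDerivAt_iff_tendsto_slope).mp hDD).mono_left hmono
    have hev : ∀ᶠ s in 𝓝[<] t, 0 < slope (deriv α) t s :=
      htend2.eventually (eventually_gt_nhds hg)
    obtain ⟨a, hat, ha⟩ := (mem_nhdsLT_iff_exists_Ioo_subset).mp hev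
    -- deriv α s < 0 for s ∈ Ioo a t
    have hneg : ∀ s ∈ Set.Ioo a t, deriv α s < 0 := by
      intro s hs
      have := ha hs
      simp only [Set.mem_setOf_eq] at this
      have hsl : slope (deriv α) t s = (deriv α s - deriv α t) / (s - t) := by
        rw [slope_def_field]
      rw [hsl, ← h, sub_zero] at this
      by_contra hcon
      push_neg at hcon
      have : deriv α s / (s - t) ≤ 0 :=
        div_nonpos_of_nonneg_of_nonpos hcon (by linarith [hs.2])
      linarith
    -- pick s₀ ∈ Ioo (max a 0) t
    obtain ⟨s₀, hs₀⟩ := exists_between (show max a 0 < t from max_lt hat ht)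
    have hs₀a : a < s₀ := lt_of_le_of_lt (le_max_left _ _) hs₀.1
    have hs₀0 : 0 < s₀ := lt_of_le_of_lt (le_max_right _ _) hs₀.1
    obtain ⟨c, hc, hceq⟩ := exists_deriv_eq_slope α hs₀.2
      ((hd.1.continuous).continuousOn) (hd.1.differentiableOn)
    have hcneg : deriv α c < 0 := hneg c ⟨lt_trans hs₀a hc.1, hc.2⟩
    rw [hceq] at hcneg
    have hs₀π : α s₀ < Real.pi := hb s₀ ⟨le_of_lt hs₀0, hs₀.2⟩
    rw [hπ] at hcneg
    have hpos : 0 < t - s₀ := by linarith [hs₀.2]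
    have : Real.pi - α s₀ < 0 := by
      by_contra hcon; push_neg at hcon
      exact absurd (div_nonneg hcon (le_of_lt hpos)) (not_le.mpr hcneg)
    linarith


/-- The set `L` of initial angles from which the rod first falls to the left
(reaches `π` having stayed strictly above the floor before) is open. -/
theorem pendulum_left_fall_set_isOpen (g : ℝ) (hg : 0 < g)
    (u : ℝ → ℝ) (hu : Continuous u) (A : ℝ → ℝ → ℝ)
    (hA : ∀ φ : ℝ, IsPendulumSolution g u (A φ) ∧ A φ 0 = φ ∧ deriv (A φ) 0 = 0) :
    IsOpen {φ : ℝ | φ ∈ Set.Ioo (0 : ℝ) Real.pi ∧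
      ∃ t > (0 : ℝ), A φ t = Real.pi ∧
        ∀ s ∈ Set.Ico (0 : ℝ) t, A φ s ∈ Set.Ioo (0 : ℝ) Real.pi} := by
  rw [Metric.isOpen_iff]
  rintro φ ⟨hφ, t, ht, hπ, hIco⟩
  obtain ⟨hsol, h00, hd0⟩ := hA φ
  set α : ℝ → ℝ := A φ with hαdef
  have hαd := sol_diff hsol
  have hαc : Continuous α := hαd.1.continuous
  -- Step A: deriv α t > 0
  have hdt : 0 < deriv α t :=
    deriv_pos_at_hit g hg u α hsol t ht hπ (fun s hs => (hIco s hs).2)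
  -- Step B: find t₁ > t with α t₁ > π and α > 0 on [t, t₁]
  have htend : Filter.Tendsto (slope α t) (𝓝[>] t) (𝓝 (deriv α t)) :=
    ((hasDerivAt_iff_tendsto_slope).mp (hαd.1 t).hasDerivAt).mono_left
      (nhdsWithin_mono _ (fun x hx => ne_of_gt hx))
  have hev : ∀ᶠ s in 𝓝[>] t, 0 < slope α t s := htend.eventually (eventually_gt_nhds hdt)
  obtain ⟨b, hbt, hb⟩ := (mem_nhdsGT_iff_exists_Ioo_subset).mp hev
  obtain ⟨δ₀, hδ₀, hδ₀p⟩ : ∃ δ₀ > 0, ∀ s, |s - t| < δ₀ → 0 < α s := by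
    have : ∀ᶠ s in 𝓝 t, 0 < α s := by
      have := hαc.continuousAt (x := t)
      have h2 : ∀ᶠ y in 𝓝 (α t), 0 < y := by
        rw [hπ]; exact eventually_gt_nhds Real.pi_pos
      exact this.eventually h2
    obtain ⟨δ₀, hδ₀, h⟩ := Metric.eventually_nhds_iff.mp this
    exact ⟨δ₀, hδ₀, fun s hs => h (by rw [Real.dist_eq]; exact hs)⟩
  obtain ⟨t₁, ht₁⟩ := exists_between (show t < min b (t + δ₀) from lt_min hbt (by linarith))
  have ht₁b : t₁ < b := lt_of_lt_of_le ht₁.2 (min_le_left _ _)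
  have ht₁δ : t₁ < t + δ₀ := lt_of_lt_of_le ht₁.2 (min_le_right _ _)
  have ht₁t : t < t₁ := ht₁.1
  have hαt₁ : Real.pi < α t₁ := by
    have := hb ⟨ht₁t, ht₁b⟩
    simp only [Set.mem_setOf_eq] at this
    have hsl : slope α t t₁ = (α t₁ - α t) / (t₁ - t) := slope_def_field α t t₁
    rw [hsl, hπ] at this
    have hpos : 0 < t₁ - t := by linarith
    have h3 : α t₁ - Real.pi = (α t₁ - Real.pi) / (t₁ - t) * (t₁ - t) :=
      (div_mul_cancel₀ _ (ne_of_gt hpos)).symm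
    nlinarith [mul_pos this hpos]
  have hpos01 : ∀ s ∈ Set.Icc (0:ℝ) t₁, 0 < α s := by
    intro s hs
    rcases lt_or_ge s t with h | h
    · exact (hIco s ⟨hs.1, h⟩).1
    · exact hδ₀p s (by rw [abs_sub_lt_iff]; constructor <;> [linarith [hs.2]; linarith])
  -- min of α on [0, t₁]
  have ht₁0 : (0:ℝ) ≤ t₁ := by linarith
  obtain ⟨x₀, hx₀mem, hx₀⟩ := (isCompact_Icc (a := (0:ℝ)) (b := t₁)).exists_isMinOn
    (Set.nonempty_Icc.mpr ht₁0) (hαc.continuousOn)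
  have hc0 : 0 < α x₀ := hpos01 x₀ hx₀mem
  -- choose ε
  set ε : ℝ := min (min (α t₁ - Real.pi) (α x₀)) (min φ (Real.pi - φ)) with hε
  have hεpos : 0 < ε := by
    apply lt_min (lt_min (by linarith) hc0) (lt_min hφ.1 (by linarith [hφ.2]))
  have hε1 : ε ≤ α t₁ - Real.pi := le_trans (min_le_left _ _) (min_le_left _ _)
  have hε2 : ε ≤ α x₀ := le_trans (min_le_left _ _) (min_le_right _ _)
  have hε3 : ε ≤ φ := le_trans (min_le_right _ _) (min_le_left _ _)
  have hε4 : ε ≤ Real.pi - φ := le_trans (min_le_right _ _) (min_le_right _ _)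
  -- Gronwall constant
  obtain ⟨C, hC, hgron⟩ := pendulum_gronwall g u hu t₁ ht₁0
  refine ⟨ε / (2 * C), by positivity, ?_⟩
  intro ψ hψ
  rw [Metric.mem_ball, Real.dist_eq] at hψ
  obtain ⟨hsolψ, h00ψ, hd0ψ⟩ := hA ψ
  set β : ℝ → ℝ := A ψ with hβdef
  have hβc : Continuous β := (sol_diff hsolψ).1.continuous
  have hclose : ∀ s ∈ Set.Icc (0:ℝ) t₁, |β s - α s| < ε := by
    intro s hs
    have := hgron α β hsol hsolψ (by rw [hd0, hd0ψ]) s hs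
    have h2 : |β 0 - α 0| < ε / (2 * C) := by rwa [h00ψ, h00]
    calc |β s - α s| ≤ C * |β 0 - α 0| := this
      _ < C * (ε / (2 * C)) := by
          apply mul_lt_mul_of_pos_left h2 hC
      _ = ε / 2 := by field_simp
      _ < ε := by linarith
  have hψφ : |ψ - φ| < ε := by
    have := hclose 0 ⟨le_refl _, ht₁0⟩
    rwa [h00ψ, h00] at this
  have hψ0 : 0 < ψ := by
    have := abs_sub_lt_iff.mp hψφ
    linarith
  have hψπ : ψ < Real.pi := by
    have := abs_sub_lt_iff.mp hψφ
    linarith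
  have hβt₁ : Real.pi < β t₁ := by
    have := abs_sub_lt_iff.mp (hclose t₁ ⟨ht₁0, le_refl _⟩)
    linarith
  have hβpos : ∀ s ∈ Set.Icc (0:ℝ) t₁, 0 < β s := by
    intro s hs
    have h1 := abs_sub_lt_iff.mp (hclose s hs)
    have h2 : α x₀ ≤ α s := hx₀ hs
    linarith
  have hβ0π : β 0 < Real.pi := by rw [h00ψ]; exact hψπ
  -- first hitting time
  set S : Set ℝ := Set.Icc 0 t₁ ∩ β ⁻¹' {Real.pi} with hS
  have hSne : S.Nonempty := by
    have hsub := intermediate_value_Icc ht₁0 hβc.continuousOn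
    have : Real.pi ∈ Set.Icc (β 0) (β t₁) := ⟨le_of_lt hβ0π, le_of_lt hβt₁⟩
    obtain ⟨r, hr, hrπ⟩ := hsub this
    exact ⟨r, hr, hrπ⟩
  have hSclosed : IsClosed S := isClosed_Icc.inter (isClosed_singleton.preimage hβc)
  have hSbdd : BddBelow S := ⟨0, fun r hr => hr.1.1⟩
  set t' : ℝ := sInf S with ht'
  have ht'S : t' ∈ S := hSclosed.csInf_mem hSne hSbdd
  have ht'π : β t' = Real.pi := ht'S.2
  have ht'mem : t' ∈ Set.Icc (0:ℝ) t₁ := ht'S.1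
  have ht'pos : 0 < t' := by
    rcases lt_or_eq_of_le ht'mem.1 with h | h
    · exact h
    · exfalso; rw [← h] at ht'π; rw [h00ψ] at ht'π; exact absurd ht'π (ne_of_lt hψπ)
  refine ⟨⟨hψ0, hψπ⟩, t', ht'pos, ht'π, ?_⟩
  intro s hs
  have hst₁ : s ∈ Set.Icc (0:ℝ) t₁ := ⟨hs.1, le_trans (le_of_lt hs.2) ht'mem.2⟩
  refine ⟨hβpos s hst₁, ?_⟩
  by_contra hcon
  push_neg at hcon
  have hsub := intermediate_value_Icc hs.1 hβc.continuousOn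
  have : Real.pi ∈ Set.Icc (β 0) (β s) := ⟨le_of_lt hβ0π, hcon⟩
  obtain ⟨r, hr, hrπ⟩ := hsub this
  have hrS : r ∈ S := ⟨⟨hr.1, le_trans hr.2 hst₁.2⟩, hrπ⟩
  have : t' ≤ r := csInf_le hSbdd hrS
  linarith [hr.2, hs.2]
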